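/- For all integers n ≥ 1 and m ≥ 2, the number of fuzzy bitopological spaces on an n-element set X with membership values in an m-element chain M in which both fuzzy topologies have exactly 3 open sets is (τᵢ, τⱼ)_F(n, m, 3) = (m^(2n) − 3·m^n + 2)/2. -/

import Mathlib

/-- A fuzzy topology on `Fin n` with membership values in the `m`-element chain `Fin m`:
a collection of fuzzy sets (functions `Fin n → Fin m`) containing the constant function
with the least value, the constant function with the greatest value, and closed under
pointwise (binary) supremum and infimum. -/
def IsFuzzyTopology {n m : ℕ} (hm : m ≠ 0) (τ : Finset (Fin n → Fin m)) : Prop :=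
  (fun _ => (⟨0, Nat.pos_of_ne_zero hm⟩ : Fin m)) ∈ τ ∧
  (fun _ => (⟨m - 1, by omega⟩ : Fin m)) ∈ τ ∧
  (∀ f ∈ τ, ∀ g ∈ τ, f ⊔ g ∈ τ) ∧
  (∀ f ∈ τ, ∀ g ∈ τ, f ⊓ g ∈ τ)

/-- `tauF n m k hm` is the number of fuzzy topologies on an `n`-element set with values in an
`m`-element chain having exactly `k` open sets. -/
noncomputable def tauF (n m k : ℕ) (hm : m ≠ 0) : ℕ :=
  Nat.card {τ : Finset (Fin n → Fin m) // IsFuzzyTopology hm τ ∧ τ.card = k}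

/-- `biTauF n m k hm` is the number of fuzzy bitopological spaces (unordered pairs of fuzzy
topologies, allowing equal ones) on an `n`-element set with values in an `m`-element chain in
which both topologies have exactly `k` open sets. -/
noncomputable def biTauF (n m k : ℕ) (hm : m ≠ 0) : ℕ :=
  Nat.card (Sym2 {τ : Finset (Fin n → Fin m) // IsFuzzyTopology hm τ ∧ τ.card = k})

lemma chain_closed {α : Type*} [Lattice α] [DecidableEq α] {S : Finset α}
    (h : ∀ a ∈ S, ∀ b ∈ S, a ≤ b ∨ b ≤ a) :
    (∀ a ∈ S, ∀ b ∈ S, a ⊔ b ∈ S) ∧ (∀ a ∈ S, ∀ b ∈ S, a ⊓ b ∈ S) := by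
  constructor <;> intro a ha b hb <;> rcases h a ha b hb with hh | hh
  · rw [sup_eq_right.mpr hh]; exact hb
  · rw [sup_eq_left.mpr hh]; exact ha
  · rw [inf_eq_left.mpr hh]; exact ha
  · rw [inf_eq_right.mpr hh]; exact hb

set_option maxHeartbeats 1000000 in
theorem biTauF_three_open_sets (n m : ℕ) (hn : 1 ≤ n) (hm : 2 ≤ m) :
    (biTauF n m 3 (by omega) : ℤ) =
      ((m : ℤ) ^ (2 * n) - 3 * (m : ℤ) ^ n + 2) / 2 := by
  classical
  have hm0 : m ≠ 0 := by omega
  set c0 : Fin n → Fin m := fun _ => ⟨0, Nat.pos_of_ne_zero hm0⟩ with hc0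
  set c1 : Fin n → Fin m := fun _ => ⟨m - 1, by omega⟩ with hc1
  have hle0 : ∀ f : Fin n → Fin m, c0 ≤ f := by
    intro f i
    simp [hc0, Fin.le_def]
  have hle1 : ∀ f : Fin n → Fin m, f ≤ c1 := by
    intro f i
    have := (f i).isLt
    simp only [hc1, Fin.le_def]
    omega
  have hne : c0 ≠ c1 := by
    intro h
    have := congrFun h ⟨0, by omega⟩
    simp only [hc0, hc1, Fin.mk.injEq] at this
    omega
  -- the 3-element fuzzy topologies are exactly {c0, f, c1} for f ∉ {c0, c1}
  have hS : ∀ f : Fin n → Fin m, IsFuzzyTopology hm0 ({c0, f, c1} : Finset _) := by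
    intro f
    have hch : ∀ a ∈ ({c0, f, c1} : Finset _), ∀ b ∈ ({c0, f, c1} : Finset _),
        a ≤ b ∨ b ≤ a := by
      intro a ha b hb
      simp only [Finset.mem_insert, Finset.mem_singleton] at ha hb
      rcases ha with rfl | rfl | rfl <;> rcases hb with rfl | rfl | rfl <;>
        first
          | exact Or.inl (hle0 _)
          | exact Or.inr (hle0 _)
          | exact Or.inl (hle1 _)
          | exact Or.inr (hle1 _)
          | exact Or.inl le_rfl
    obtain ⟨h1, h2⟩ := chain_closed hch
    exact ⟨by simp [hc0], by simp [hc1], h1, h2⟩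
  set α := {τ : Finset (Fin n → Fin m) // IsFuzzyTopology hm0 τ ∧ τ.card = 3} with hα
  have hg : ∀ f : {f : Fin n → Fin m // f ≠ c0 ∧ f ≠ c1},
      IsFuzzyTopology hm0 ({c0, f.1, c1} : Finset _) ∧
        ({c0, f.1, c1} : Finset _).card = 3 := by
    intro f
    refine ⟨hS f.1, ?_⟩
    rw [Finset.card_insert_of_notMem (by simp [f.2.1.symm, hne]),
      Finset.card_insert_of_notMem (by simp [f.2.2])]
    simp
  let g : {f : Fin n → Fin m // f ≠ c0 ∧ f ≠ c1} → α := fun f => ⟨_, hg f⟩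
  have hgbij : Function.Bijective g := by
    constructor
    · rintro ⟨f, hf⟩ ⟨f', hf'⟩ h
      have h' : ({c0, f, c1} : Finset _) = {c0, f', c1} := congrArg Subtype.val h
      apply Subtype.ext
      show f = f'
      have : f ∈ ({c0, f', c1} : Finset _) := by
        rw [← h']; simp
      simp only [Finset.mem_insert, Finset.mem_singleton] at this
      rcases this with h | h | h
      · exact absurd h hf.1
      · exact h
      · exact absurd h hf.2
    · rintro ⟨τ, hτ, hcard⟩
      have hc0m : c0 ∈ τ := hτ.1
      have hc1m : c1 ∈ τ := hτ.2.1
      have hsub : ({c0, c1} : Finset _) ⊆ τ := by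
        intro x hx
        simp only [Finset.mem_insert, Finset.mem_singleton] at hx
        rcases hx with rfl | rfl <;> assumption
      have hdiff : (τ \ ({c0, c1} : Finset _)).card = 1 := by
        rw [Finset.card_sdiff_of_subset hsub, hcard, Finset.card_insert_of_notMem (by simp [hne]),
          Finset.card_singleton]
      obtain ⟨f, hf⟩ := Finset.card_eq_one.mp hdiff
      have hfm : f ∈ τ \ ({c0, c1} : Finset _) := by rw [hf]; simp
      rw [Finset.mem_sdiff, Finset.mem_insert, Finset.mem_singleton] at hfm
      refine ⟨⟨f, fun h => hfm.2 (Or.inl h), fun h => hfm.2 (Or.inr h)⟩, ?_⟩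
      apply Subtype.ext
      show ({c0, f, c1} : Finset _) = τ
      refine Finset.eq_of_subset_of_card_le ?_ ?_
      · intro x hx
        simp only [Finset.mem_insert, Finset.mem_singleton] at hx
        rcases hx with rfl | rfl | rfl
        · exact hc0m
        · exact hfm.1
        · exact hc1m
      · rw [hcard, (hg ⟨f, fun h => hfm.2 (Or.inl h), fun h => hfm.2 (Or.inr h)⟩).2]
  have hcardα : Nat.card α = m ^ n - 2 := by
    rw [← Nat.card_eq_of_bijective g hgbij, Nat.card_eq_fintype_card,
      Fintype.card_subtype]
    have : Finset.univ.filter (fun f : Fin n → Fin m => f ≠ c0 ∧ f ≠ c1)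
        = Finset.univ \ ({c0, c1} : Finset _) := by
      ext f; simp [and_comm]
    rw [this, Finset.card_sdiff_of_subset (Finset.subset_univ _),
      Finset.card_insert_of_notMem (by simp [hne]), Finset.card_singleton,
      Finset.card_univ, Fintype.card_fun]
    simp
  -- compute biTauF
  have hN : 2 ≤ m ^ n := le_trans hm (Nat.le_self_pow (by omega) m)
  haveI : Fintype α := Fintype.ofFinite α
  have hbt : biTauF n m 3 (by omega) = (m ^ n - 2) * (m ^ n - 2 + 1) / 2 := by
    have : biTauF n m 3 (by omega) = Nat.card (Sym2 α) := rfl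
    rw [this, Nat.card_eq_fintype_card, Sym2.card, ← Nat.card_eq_fintype_card, hcardα,
      Nat.choose_two_right, Nat.add_sub_cancel, Nat.mul_comm]
  obtain ⟨k, hk⟩ : ∃ k, (m ^ n - 2) * (m ^ n - 2 + 1) = 2 * k := by
    rcases Nat.even_mul_succ_self (m ^ n - 2) with ⟨k, hk⟩
    exact ⟨k, by omega⟩
  have hL : biTauF n m 3 (by omega) = k := by
    rw [hbt, hk, Nat.mul_div_cancel_left _ (by norm_num)]
  rw [hL]
  have hcast : ((m : ℤ) ^ (2 * n) - 3 * (m : ℤ) ^ n + 2) = 2 * (k : ℤ) := by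
    have h1 : ((m ^ n - 2 : ℕ) : ℤ) = (m : ℤ) ^ n - 2 := by
      push_cast [Nat.cast_sub hN]; ring
    have h2 : (((m ^ n - 2) * (m ^ n - 2 + 1) : ℕ) : ℤ) = 2 * (k : ℤ) := by
      exact_mod_cast congrArg (Nat.cast : ℕ → ℤ) hk
    push_cast [h1] at h2
    have : (m : ℤ) ^ (2 * n) = ((m : ℤ) ^ n) ^ 2 := by rw [pow_mul']
    rw [this]
    linarith [h2]
  rw [hcast, Int.mul_ediv_cancel_left _ (by norm_num)]
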